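/- Let K be a field and p a prime with p ≠ char(K). Let a ∈ K* be an element that is not a p-th power in K, and let K(a^{1/p}) be the field obtained by adjoining a p-th root of a. Then the kernel of the natural homomorphism K*/K*^p → K(a^{1/p})*/K(a^{1/p})*^p is the cyclic subgroup generated by the class of a; that is, if b ∈ K* becomes a p-th power in K(a^{1/p}), then b = a^i d^p for some integer i and some d ∈ K*. -/

import Mathlib

open Polynomial AdjoinRoot

lemma my_descent {K F : Type*} [Field K] [Field F] [Algebra K F] [FiniteDimensional K F]
    {p : ℕ} (hp0 : p ≠ 0) (hcop : Nat.Coprime p (Module.finrank K F)) {x : K} (hx : x ≠ 0)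
    {e : F} (he : e ^ p = algebraMap K F x) : ∃ d : K, d ^ p = x := by
  set m := Module.finrank K F with hm
  have hN : (Algebra.norm K e) ^ p = x ^ m := by
    rw [← map_pow, he, Algebra.norm_algebraMap]
  have hNne : Algebra.norm K e ≠ 0 := by
    intro h
    rw [h, zero_pow hp0] at hN
    exact pow_ne_zero m hx hN.symm
  have hb := Int.gcd_eq_gcd_ab (p : ℤ) (m : ℤ)
  have hg : Int.gcd (p : ℤ) (m : ℤ) = 1 := by
    simpa [Int.gcd_natCast_natCast] using hcop
  rw [hg] at hb
  refine ⟨x ^ (Int.gcdA p m) * (Algebra.norm K e) ^ (Int.gcdB p m), ?_⟩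
  have key : (x ^ (Int.gcdA p m) * (Algebra.norm K e) ^ (Int.gcdB p m)) ^ (p : ℤ) = x := by
    rw [mul_zpow, ← zpow_mul, ← zpow_mul]
    have h2 : (Algebra.norm K e) ^ (Int.gcdB p m * p) = x ^ ((m : ℤ) * Int.gcdB p m) := by
      rw [mul_comm, zpow_mul, zpow_mul]
      norm_cast
      rw [hN]
    rw [h2, ← zpow_add₀ hx, mul_comm (Int.gcdA p m) (p : ℤ), ← hb]
    simp
  calc (x ^ (Int.gcdA p m) * (Algebra.norm K e) ^ (Int.gcdB p m)) ^ p
      = (x ^ (Int.gcdA p m) * (Algebra.norm K e) ^ (Int.gcdB p m)) ^ (p : ℤ) :=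
        (zpow_natCast _ _).symm
    _ = x := key


lemma my_kummer_step {F : Type*} [Field F] {p : ℕ} (hp : p.Prime) {ζ : F}
    (hζ : IsPrimitiveRoot ζ p) {a : F} (H : Irreducible (X ^ p - C a)) {b : F} (hb : b ≠ 0)
    (c : AdjoinRoot (X ^ p - C a)) (hc : c ^ p = algebraMap F _ b) :
    ∃ i < p, ∃ d : F, c = algebraMap F _ d * (AdjoinRoot.root (X ^ p - C a)) ^ i := by
  haveI := Fact.mk H
  haveI : NeZero p := ⟨hp.ne_zero⟩
  have hθp : (root (X ^ p - C a)) ^ p = algebraMap F _ a := root_X_pow_sub_C_pow p a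
  have hmonic : (X ^ p - C a : F[X]).Monic := monic_X_pow_sub_C a hp.ne_zero
  have hfne : (X ^ p - C a : F[X]) ≠ 0 := hmonic.ne_zero
  have hdegf : (X ^ p - C a : F[X]).degree = (p : ℕ) := degree_X_pow_sub_C hp.pos a
  -- the automorphism sending the root θ to ζ θ
  have hroot : aeval ((algebraMap F (AdjoinRoot (X ^ p - C a))) ζ * root (X ^ p - C a))
      ((X : F[X]) ^ p - C a) = 0 := by
    have hzp : ((algebraMap F (AdjoinRoot (X ^ p - C a))) ζ * root (X ^ p - C a)) ^ p
        = algebraMap F (AdjoinRoot (X ^ p - C a)) a := by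
      rw [mul_pow, ← map_pow, hζ.pow_eq_one, map_one, one_mul, hθp]
    rw [map_sub, aeval_C, map_pow, aeval_X, hzp, sub_self]
  set σ : AdjoinRoot (X ^ p - C a) →ₐ[F] AdjoinRoot (X ^ p - C a) :=
    AdjoinRoot.liftAlgHom _ (Algebra.ofId F _) _ hroot with hσ
  have hσθ : σ (root (X ^ p - C a)) =
      algebraMap F (AdjoinRoot (X ^ p - C a)) ζ * root (X ^ p - C a) :=
    AdjoinRoot.liftAlgHom_root _ _ _ hroot
  have hcne : c ≠ 0 := by
    intro h
    rw [h, zero_pow hp.ne_zero] at hc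
    exact hb ((_root_.map_eq_zero _).mp hc.symm)
  have hσcp : (σ c) ^ p = c ^ p := by
    rw [← map_pow, hc, AlgHom.commutes]
  have hu : (σ c * c⁻¹) ^ p = 1 := by
    rw [mul_pow, hσcp, inv_pow, mul_inv_cancel₀ (pow_ne_zero _ hcne)]
  have hζ' : IsPrimitiveRoot (algebraMap F (AdjoinRoot (X ^ p - C a)) ζ) p :=
    hζ.map_of_injective (algebraMap F _).injective
  obtain ⟨i, hip, hiu⟩ := hζ'.eq_pow_of_pow_eq_one hu
  have hσc : σ c = algebraMap F (AdjoinRoot (X ^ p - C a)) (ζ ^ i) * c := by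
    rw [map_pow, hiu]
    field_simp
  -- polynomial representative of c of degree < p
  obtain ⟨g0, hg0⟩ := AdjoinRoot.mk_surjective (g := (X ^ p - C a : F[X])) c
  set g : F[X] := g0 %ₘ (X ^ p - C a) with hg
  have hmkg : AdjoinRoot.mk (X ^ p - C a) g = c := by
    rw [hg, modByMonic_eq_sub_mul_div _ (X ^ p - C a), map_sub, map_mul, AdjoinRoot.mk_self,
      zero_mul, sub_zero, hg0]
  have hgdeg : g.degree < (p : ℕ) := hdegf ▸ degree_modByMonic_lt g0 hmonic
  have hgne : g ≠ 0 := by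
    intro h
    rw [h, map_zero] at hmkg
    exact hcne hmkg.symm
  have hgnat : g.natDegree < p := by
    rwa [← natDegree_lt_iff_degree_lt hgne] at hgdeg
  -- the twisted polynomial
  set g' : F[X] := ∑ j ∈ Finset.range p, C (ζ ^ j * g.coeff j) * X ^ j with hg'
  have e1 : AdjoinRoot.mk (X ^ p - C a) g' = σ c := by
    rw [← hmkg, ← AdjoinRoot.aeval_eq g, ← AdjoinRoot.aeval_eq g',
      ← Polynomial.aeval_algHom_apply, hσθ, aeval_eq_sum_range' hgnat, hg', map_sum]
    refine Finset.sum_congr rfl fun j _ => ?_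
    rw [map_mul, aeval_C, map_pow, aeval_X, Algebra.smul_def, mul_pow, ← map_pow, map_mul]
    ring
  have e2 : AdjoinRoot.mk (X ^ p - C a) (C (ζ ^ i) * g) =
      algebraMap F (AdjoinRoot (X ^ p - C a)) (ζ ^ i) * c := by
    rw [map_mul, hmkg, AdjoinRoot.mk_C, ← AdjoinRoot.algebraMap_eq]
  have h4 : AdjoinRoot.mk (X ^ p - C a) g' = AdjoinRoot.mk (X ^ p - C a) (C (ζ ^ i) * g) := by
    rw [e1, e2, hσc]
  have h5 : g' - C (ζ ^ i) * g = 0 := by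
    refine eq_zero_of_dvd_of_degree_lt (AdjoinRoot.mk_eq_mk.mp h4) ?_
    rw [hdegf]
    refine lt_of_le_of_lt (degree_sub_le _ _) (max_lt ?_ ?_)
    · refine lt_of_le_of_lt (degree_sum_le _ _) ?_
      rw [Finset.sup_lt_iff (by exact_mod_cast WithBot.bot_lt_coe p)]
      intro j hj
      refine lt_of_le_of_lt (degree_mul_le _ _) ?_
      calc (C (ζ ^ j * g.coeff j)).degree + (X ^ j : F[X]).degree ≤ 0 + j := by
              gcongr
              · exact degree_C_le
              · exact degree_X_pow_le j
        _ < (p : ℕ) := by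
              rw [zero_add]
              exact_mod_cast WithBot.coe_lt_coe.mpr (Finset.mem_range.mp hj)
    · calc (C (ζ ^ i) * g).degree ≤ (C (ζ ^ i)).degree + g.degree := degree_mul_le _ _
        _ ≤ 0 + g.degree := by gcongr; exact degree_C_le
        _ < (p : ℕ) := by simpa using hgdeg
  have hgc : ∀ j, g'.coeff j = if j < p then ζ ^ j * g.coeff j else 0 := by
    intro j
    rw [hg', finset_sum_coeff]
    simp only [coeff_C_mul, coeff_X_pow, mul_ite, mul_one, mul_zero]
    simp only [Finset.sum_ite_eq, Finset.mem_range]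
  have hcoeff : ∀ j < p, ζ ^ j * g.coeff j = ζ ^ i * g.coeff j := by
    intro j hj
    have h6 := congrArg (fun q => Polynomial.coeff q j) h5
    simp only [coeff_sub, coeff_zero, sub_eq_zero, coeff_C_mul] at h6
    rwa [hgc j, if_pos hj] at h6
  have hzero : ∀ j, j ≠ i → g.coeff j = 0 := by
    intro j hji
    by_cases hjp : j < p
    · by_contra hne
      exact hji (hζ.pow_inj hjp hip (mul_right_cancel₀ hne (hcoeff j hjp)))
    · exact coeff_eq_zero_of_natDegree_lt (lt_of_lt_of_le hgnat (le_of_not_gt hjp))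
  have hgeq : g = C (g.coeff i) * X ^ i := by
    ext j
    rw [coeff_C_mul, coeff_X_pow, mul_ite, mul_one, mul_zero]
    by_cases hji : j = i
    · subst hji; simp
    · simp [hzero j hji, hji]
  obtain ⟨d, hd⟩ : ∃ d, g = C d * X ^ i := ⟨g.coeff i, hgeq⟩
  refine ⟨i, hip, d, ?_⟩
  rw [← hmkg, hd, map_mul, AdjoinRoot.mk_C, map_pow, AdjoinRoot.mk_X, ← AdjoinRoot.algebraMap_eq]

set_option maxHeartbeats 1600000 in
/-- Let `K` be a field and `p` a prime with `p ≠ char K`. Let `a ∈ K*` be a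
non-`p`-th power and let `E = K(a^{1/p})` be the field obtained by adjoining a `p`-th root `α`
of `a` (so `α ^ p = a` and `E` is generated over `K` by `α`). Then the kernel of the natural
homomorphism `K*/K*^p → E*/E*^p` is generated by the class of `a`: an element `b ∈ K*` becomes
a `p`-th power in `E` if and only if `b = a^i * d^p` for some integer `i` and some `d ∈ K`. -/
theorem statement4 (K : Type) [Field K] (p : ℕ) (hp : p.Prime) (hchar : ringChar K ≠ p)
    (a : K) (ha0 : a ≠ 0) (ha : ∀ c : K, c ^ p ≠ a)
    (E : Type) [Field E] [Algebra K E] (α : E)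
    (hα : α ^ p = algebraMap K E a) (hgen : Algebra.adjoin K {α} = ⊤)
    (b : K) (hb : b ≠ 0) :
    (∃ c : E, c ^ p = algebraMap K E b) ↔ ∃ (i : ℤ) (d : K), b = a ^ i * d ^ p := by
  constructor
  · rintro ⟨c, hc⟩
    -- setup
    have hint : IsIntegral K α :=
      ⟨X ^ p - C a, monic_X_pow_sub_C a hp.ne_zero, by
        simp [eval₂_sub, eval₂_pow, hα]⟩
    haveI : FiniteDimensional K E := by
      have B := (Algebra.adjoin.powerBasis hint).map
        ((Subalgebra.equivOfEq _ ⊤ hgen).trans Subalgebra.topEquiv)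
      exact B.finite
    haveI : Algebra.IsAlgebraic K E := Algebra.IsAlgebraic.of_finite K E
    set Ω := AlgebraicClosure K with hΩ
    -- a primitive p-th root of unity in Ω
    haveI : CharP Ω (ringChar K) :=
      charP_of_injective_algebraMap (algebraMap K Ω).injective (ringChar K)
    haveI : NeZero (p : Ω) := by
      constructor
      intro h0
      rcases (hp.eq_one_or_self_of_dvd _ ((CharP.cast_eq_zero_iff Ω (ringChar K) p).mp h0)) with
        h1 | h2
      · exact CharP.char_ne_one Ω (ringChar K) h1
      · exact hchar h2
    obtain ⟨ζ, hζ⟩ := HasEnoughRootsOfUnity.exists_primitiveRoot Ω p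
    -- the embedding of E into Ω
    let φ : E →ₐ[K] Ω := IsAlgClosed.lift
    set β : Ω := φ α with hβ
    have hβp : β ^ p = algebraMap K Ω a := by
      rw [hβ, ← map_pow, hα, AlgHom.commutes]
    set c' : Ω := φ c with hc'
    have hc'p : c' ^ p = algebraMap K Ω b := by
      rw [hc', ← map_pow, hc, AlgHom.commutes]
    -- the field F = K(ζ)
    have hζint : IsIntegral K ζ :=
      ⟨X ^ p - C 1, monic_X_pow_sub_C 1 hp.ne_zero, by
        simp [eval₂_sub, eval₂_pow, hζ.pow_eq_one]⟩
    set F := IntermediateField.adjoin K ({ζ} : Set Ω) with hF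
    haveI : FiniteDimensional K F := IntermediateField.adjoin.finiteDimensional hζint
    have hζmem : ζ ∈ F := IntermediateField.subset_adjoin K {ζ} rfl
    set ζF : F := ⟨ζ, hζmem⟩ with hζF
    have hζFprim : IsPrimitiveRoot ζF p := by
      apply IsPrimitiveRoot.of_map_of_injective (f := algebraMap F Ω)
        (hf := (algebraMap F Ω).injective)
      exact hζ
    -- [F : K] is coprime to p
    have hcop : Nat.Coprime p (Module.finrank K F) := by
      have hfr : Module.finrank K F = (minpoly K ζ).natDegree :=
        IntermediateField.adjoin.finrank hζint
      have hdvd : minpoly K ζ ∣ Polynomial.cyclotomic p K := by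
        apply minpoly.dvd
        have := hζ.isRoot_cyclotomic hp.pos
        rwa [Polynomial.aeval_def, Polynomial.eval₂_eq_eval_map, Polynomial.map_cyclotomic]
      have hle : (minpoly K ζ).natDegree ≤ p - 1 := by
        have := Polynomial.natDegree_le_of_dvd hdvd (Polynomial.cyclotomic_ne_zero p K)
        rwa [Polynomial.natDegree_cyclotomic, Nat.totient_prime hp] at this
      rw [hp.coprime_iff_not_dvd]
      intro hdvd'
      have hpos : 0 < Module.finrank K F := Module.finrank_pos
      have := Nat.le_of_dvd hpos hdvd'
      omega
    -- a is not a p-th power in F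
    have hnotp : ∀ e : F, e ^ p ≠ algebraMap K F a := by
      intro e he
      obtain ⟨d, hd⟩ := my_descent hp.ne_zero hcop ha0 he
      exact ha d hd
    have H : Irreducible ((X : F[X]) ^ p - C (algebraMap K F a)) :=
      X_pow_sub_C_irreducible_of_prime hp hnotp
    haveI := Fact.mk H
    -- the embedding ψ of F[p√a] into Ω sending the root to β
    have hβroot : aeval β ((X : F[X]) ^ p - C (algebraMap K F a)) = 0 := by
      rw [map_sub, aeval_C, map_pow, aeval_X, hβp, ← IsScalarTower.algebraMap_apply, sub_self]
    set ψ : AdjoinRoot ((X : F[X]) ^ p - C (algebraMap K F a)) →ₐ[F] Ω :=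
      AdjoinRoot.liftAlgHom _ (Algebra.ofId F Ω) β hβroot with hψ
    have hψroot : ψ (root _) = β := AdjoinRoot.liftAlgHom_root _ _ _ hβroot
    have hψinj : Function.Injective ψ := fun x y hxy => ψ.toRingHom.injective hxy
    -- c' is in the image of ψ
    have hcmem : c' ∈ ψ.range := by
      have h1 : c' ∈ Algebra.adjoin K ({β} : Set Ω) := by
        have hc_top : c ∈ Algebra.adjoin K ({α} : Set E) := hgen ▸ Algebra.mem_top
        have h0 : c' ∈ (Algebra.adjoin K ({α} : Set E)).map φ :=
          Subalgebra.mem_map.mpr ⟨c, hc_top, rfl⟩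
        rwa [AlgHom.map_adjoin, Set.image_singleton] at h0
      have h2 : Algebra.adjoin K ({β} : Set Ω) ≤
          Subalgebra.restrictScalars K (Algebra.adjoin F ({β} : Set Ω)) :=
        Algebra.adjoin_le (Set.singleton_subset_iff.mpr (Algebra.subset_adjoin rfl))
      have h3 : Algebra.adjoin F ({β} : Set Ω) ≤ ψ.range :=
        Algebra.adjoin_le (Set.singleton_subset_iff.mpr ⟨root _, hψroot⟩)
      exact h3 (h2 h1)
    obtain ⟨t, ht0⟩ := hcmem
    have ht : ψ t = c' := ht0
    have hbF : (algebraMap K F b) ≠ 0 := by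
      simpa using hb
    have htp : t ^ p = algebraMap F _ (algebraMap K F b) := by
      apply hψinj
      rw [map_pow, ht, hc'p, AlgHom.commutes, ← IsScalarTower.algebraMap_apply]
    -- apply the Kummer step
    obtain ⟨i, hip, d', hd'⟩ := my_kummer_step hp hζFprim H hbF t htp
    -- transfer back to Ω
    have hc'eq : c' = algebraMap F Ω d' * β ^ i := by
      rw [← ht, hd', map_mul, map_pow]
      simp only [hψroot]
      rw [AlgHom.commutes]
    -- b / a^i is a p-th power in F
    have hai : (algebraMap K Ω a) ^ i ≠ 0 := pow_ne_zero _ (by simpa using ha0)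
    have hx0 : b / a ^ i ≠ 0 := div_ne_zero hb (pow_ne_zero _ ha0)
    have hxF : (algebraMap F Ω) (d' ^ p) = algebraMap F Ω (algebraMap K F (b / a ^ i)) := by
      rw [map_pow]
      rw [← IsScalarTower.algebraMap_apply, map_div₀, map_pow]
      rw [eq_div_iff hai]
      rw [← hc'p, hc'eq, mul_pow, ← pow_mul, mul_comm i p, pow_mul, hβp]
    have hxF' : d' ^ p = algebraMap K F (b / a ^ i) := (algebraMap F Ω).injective hxF
    obtain ⟨d, hd⟩ := my_descent hp.ne_zero hcop hx0 hxF'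
    refine ⟨(i : ℤ), d, ?_⟩
    rw [zpow_natCast, hd, mul_comm, div_mul_cancel₀ _ (pow_ne_zero i ha0)]
  · rintro ⟨i, d, hbid⟩
    have hd0 : d ≠ 0 := by
      intro h
      rw [h, zero_pow hp.ne_zero, mul_zero] at hbid
      exact hb hbid
    have haE : algebraMap K E a ≠ 0 := by simpa using ha0
    have hαne : α ≠ 0 := by
      intro h
      rw [h, zero_pow hp.ne_zero] at hα
      exact haE hα.symm
    refine ⟨α ^ i * algebraMap K E d, ?_⟩
    rw [mul_pow, ← zpow_natCast (α ^ i), ← zpow_mul, mul_comm (i : ℤ) (p : ℤ), zpow_mul,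
      zpow_natCast, hα, ← map_pow, ← map_zpow₀, ← map_mul, hbid]
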